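/- Let θ be a proper convex piecewise linear function on ℝ^m and z̄ ∈ dom θ. Then there exists an open neighborhood O of z̄ such that ∂θ(z) ⊂ ∂θ(z̄) for every z ∈ O. -/

import Mathlib

noncomputable section
open Set Filter Topology Metric
open scoped RealInnerProductSpace Pointwise NNReal Classical

/-- `Euc m` is the Euclidean space `ℝ^m`. -/
abbrev Euc (m : ℕ) := EuclideanSpace ℝ (Fin m)

variable {F G : Type*} [NormedAddCommGroup F] [InnerProductSpace ℝ F]
  [NormedAddCommGroup G] [InnerProductSpace ℝ G]

/-- The (convex) subdifferential of an extended-real-valued function: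
`∂θ(z) = {v : θ(z') ≥ θ(z) + ⟨v, z' - z⟩ for all z'}`. -/
def subdiff (θ : F → EReal) (z : F) : Set F :=
  {v | ∀ z', θ z + ((⟪v, z' - z⟫ : ℝ) : EReal) ≤ θ z'}

/-- The Fréchet (regular) normal cone to `Ω` at `x`:
vectors `v` with `limsup_{y → x, y ∈ Ω} ⟨v, y - x⟩ / ‖y - x‖ ≤ 0`. -/
def frechetNormal (Ω : Set F) (x : F) : Set F :=
  {v | Filter.limsup (fun y => ⟪v, y - x⟫ / ‖y - x‖) (𝓝[Ω] x) ≤ 0}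

/-- The limiting (Mordukhovich) normal cone to `Ω` at `x`. -/
def limitingNormal (Ω : Set F) (x : F) : Set F :=
  {v | ∃ xs vs : ℕ → F, (∀ k, xs k ∈ Ω) ∧ Filter.Tendsto xs Filter.atTop (𝓝 x) ∧
    Filter.Tendsto vs Filter.atTop (𝓝 v) ∧ ∀ k, vs k ∈ frechetNormal Ω (xs k)}

/-- Pairing into the `ℓ²`-product of two inner product spaces. -/
def pl2 (x : F) (y : G) : WithLp 2 (F × G) := (WithLp.equiv 2 (F × G)).symm (x, y)

/-- The second-order subdifferential (generalized Hessian)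
`∂²θ(z,v)(u) = {w : (w,-u) ∈ N((z,v); gph ∂θ)}`. -/
def sosd (θ : F → EReal) (z v : F) (u : F) : Set F :=
  {w | pl2 w (-u) ∈ limitingNormal
    {q : WithLp 2 (F × F) | ((WithLp.equiv 2 (F × F)) q).2 ∈ subdiff θ ((WithLp.equiv 2 (F × F)) q).1}
    (pl2 z v)}

/-- The polyhedral domain `{z : ⟨d i, z⟩ ≤ β i for all i}` of a CPWL function. -/
def cpwlDom {m p : ℕ} (d : Fin p → Euc m) (β : Fin p → ℝ) : Set (Euc m) :=
  {z | ∀ i, ⟪d i, z⟫ ≤ β i}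

/-- The CPWL function determined by the data `(a, α, d, β)`:
`θ(z) = max_i (⟨a i, z⟩ - α i)` on its polyhedral domain and `+∞` outside. -/
def cpwlFun {m l p : ℕ} (a : Fin l → Euc m) (α : Fin l → ℝ) (d : Fin p → Euc m)
    (β : Fin p → ℝ) : Euc m → EReal :=
  fun z => if z ∈ cpwlDom d β then (((⨆ i, (⟪a i, z⟫ - α i)) : ℝ) : EReal) else ⊤

/-- Active indices of the max expression at `z`. -/
def Kact {m l p : ℕ} (a : Fin l → Euc m) (α : Fin l → ℝ) (d : Fin p → Euc m) (β : Fin p → ℝ)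
    (z : Euc m) : Set (Fin l) :=
  {i | cpwlFun a α d β z = ((⟪a i, z⟫ - α i : ℝ) : EReal)}

/-- Active indices of the domain inequalities at `z`. -/
def Iact {m p : ℕ} (d : Fin p → Euc m) (β : Fin p → ℝ) (z : Euc m) : Set (Fin p) :=
  {i | ⟪d i, z⟫ = β i}

/-- Convex conic hull: all finite nonnegative combinations of elements of `s`. -/
def coneHull (s : Set F) : Set F :=
  {x | ∃ (n : ℕ) (c : Fin n → ℝ) (y : Fin n → F), (∀ i, 0 ≤ c i) ∧ (∀ i, y i ∈ s) ∧
    x = ∑ i, c i • y i}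

/-- `Spar θ z` is the linear subspace parallel to the affine hull of `∂θ(z)`. -/
def Spar (θ : F → EReal) (z : F) : Submodule ℝ F := (affineSpan ℝ (subdiff θ z)).direction

/-- A convex polyhedron: a finite intersection of closed halfspaces. -/
def IsPolyhedron {V : Type*} [AddCommGroup V] [Module ℝ V] (C : Set V) : Prop :=
  ∃ (N : ℕ) (f : Fin N → V →ₗ[ℝ] ℝ) (b : Fin N → ℝ), C = {x | ∀ i, f i x ≤ b i}

/-- A proper convex piecewise linear function with values in `ℝ ∪ {+∞}`:
its epigraph is a convex polyhedron, it never takes the value `-∞`, and it is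
not identically `+∞`. -/
def IsCPWL {V : Type*} [AddCommGroup V] [Module ℝ V] (f : V → EReal) : Prop :=
  IsPolyhedron {xt : V × ℝ | f xt.1 ≤ (xt.2 : EReal)} ∧ (∀ x, f x ≠ ⊥) ∧ (∃ x, f x ≠ ⊤)

/-- Local argmin set `M_γ(w,v)` of `x ↦ φ(x,w) - ⟨v,x⟩` over the ball `‖x - xb‖ ≤ γ`,
with the convention that minimizers at which the objective is `+∞` are discarded. -/
def argminLoc {n d : ℕ} (φ : Euc n → Euc d → EReal) (xb : Euc n) (γ : ℝ) (w : Euc d)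
    (v : Euc n) : Set (Euc n) :=
  {x | ‖x - xb‖ ≤ γ ∧ φ x w ≠ ⊤ ∧
    ∀ y, ‖y - xb‖ ≤ γ → φ x w - ((⟪v, x⟫ : ℝ) : EReal) ≤ φ y w - ((⟪v, y⟫ : ℝ) : EReal)}

/-- Local optimal value `m_γ(w,v)` of `x ↦ φ(x,w) - ⟨v,x⟩` over the ball `‖x - xb‖ ≤ γ`. -/
def infLoc {n d : ℕ} (φ : Euc n → Euc d → EReal) (xb : Euc n) (γ : ℝ) (w : Euc d)
    (v : Euc n) : EReal :=
  ⨅ x ∈ {x : Euc n | ‖x - xb‖ ≤ γ}, (φ x w - ((⟪v, x⟫ : ℝ) : EReal))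

/-- `xb` is a fully stable locally optimal solution of
`minimize φ(x,wb) - ⟨vb,x⟩` : for some `γ > 0` and neighborhoods `W × V` of `(wb,vb)`,
the local argmin map is single-valued and Lipschitz with value `xb` at `(wb,vb)`, and the
local optimal value function is finite and Lipschitz. -/
def FullyStableSol {n d : ℕ} (φ : Euc n → Euc d → EReal) (xb : Euc n) (wb : Euc d)
    (vb : Euc n) : Prop :=
  ∃ γ > (0 : ℝ), ∃ W ∈ 𝓝 wb, ∃ V ∈ 𝓝 vb,
    (∃ σ : Euc d × Euc n → Euc n,
      (∃ K : ℝ≥0, LipschitzOnWith K σ (W ×ˢ V)) ∧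
      (∀ w ∈ W, ∀ v ∈ V, argminLoc φ xb γ w v = {σ (w, v)}) ∧ σ (wb, vb) = xb) ∧
    (∃ μ : Euc d × Euc n → ℝ,
      (∃ K : ℝ≥0, LipschitzOnWith K μ (W ×ˢ V)) ∧
      ∀ w ∈ W, ∀ v ∈ V, infLoc φ xb γ w v = ((μ (w, v) : ℝ) : EReal))

/-- The partial limiting subdifferential `∂ₓψ(x,w)` defined through the limiting normal
cone to the epigraph of `ψ(·,w)`. -/
def partialSubdiffX {n d : ℕ} (ψ : Euc n → Euc d → EReal) (x : Euc n) (w : Euc d) :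
    Set (Euc n) :=
  {v | ∃ r : ℝ, ψ x w = (r : EReal) ∧
    pl2 v (-1 : ℝ) ∈ limitingNormal
      {q : WithLp 2 (Euc n × ℝ) |
        ψ ((WithLp.equiv 2 (Euc n × ℝ)) q).1 w ≤ ((((WithLp.equiv 2 (Euc n × ℝ)) q).2 : ℝ) : EReal)}
      (pl2 x r)}

/-- The coderivative `D*∂ₓψ(xb,wb,qb)(u)` of the partial subdifferential mapping,
via the limiting normal cone to its graph in `ℝ^n × ℝ^d × ℝ^n`. -/
def coderivPartialSubdiffX {n d : ℕ} (ψ : Euc n → Euc d → EReal) (xb : Euc n) (wb : Euc d)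
    (qb : Euc n) (u : Euc n) : Set (Euc n × Euc d) :=
  {P | pl2 (pl2 P.1 P.2) (-u) ∈ limitingNormal
    {t : WithLp 2 (WithLp 2 (Euc n × Euc d) × Euc n) |
      ((WithLp.equiv 2 (WithLp 2 (Euc n × Euc d) × Euc n)) t).2 ∈ partialSubdiffX ψ
        ((WithLp.equiv 2 (Euc n × Euc d)) (((WithLp.equiv 2 (WithLp 2 (Euc n × Euc d) × Euc n)) t).1)).1
        ((WithLp.equiv 2 (Euc n × Euc d)) (((WithLp.equiv 2 (WithLp 2 (Euc n × Euc d) × Euc n)) t).1)).2}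
    (pl2 (pl2 xb wb) qb)}

/-- Partial Hessian in `x` : the derivative in `x` of the partial gradient in `x`. -/
def hessXX {n d : ℕ} (g : Euc n → Euc d → ℝ) (xb : Euc n) (wb : Euc d) : Euc n →L[ℝ] Euc n :=
  fderiv ℝ (fun x => gradient (fun x' => g x' wb) x) xb

/-- Mixed partial Hessian: derivative in `w` of the partial gradient in `x`. -/
def hessWX {n d : ℕ} (g : Euc n → Euc d → ℝ) (xb : Euc n) (wb : Euc d) : Euc d →L[ℝ] Euc n :=
  fderiv ℝ (fun w => gradient (fun x' => g x' w) xb) wb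

/-- Local upper subdifferential stability of CPWL functions: there is an
open neighborhood `O` of `zb` such that `∂θ(z) ⊆ ∂θ(zb)` for all `z ∈ O`. -/
theorem subdiff_cpwl_locally_subset {m l p : ℕ} (hl : 0 < l)
    (a : Fin l → Euc m) (α : Fin l → ℝ) (d : Fin p → Euc m) (β : Fin p → ℝ)
    (hdom : (cpwlDom d β).Nonempty) (zb : Euc m) (hzb : zb ∈ cpwlDom d β) :
    ∃ O : Set (Euc m), IsOpen O ∧ zb ∈ O ∧
      ∀ z ∈ O, subdiff (cpwlFun a α d β) z ⊆ subdiff (cpwlFun a α d β) zb := by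
  classical
  haveI : Nonempty (Fin l) := ⟨⟨0, hl⟩⟩
  set g : Fin l → Euc m → ℝ := fun i y => ⟪a i, y⟫ - α i with hg
  set M : Euc m → ℝ := fun y => ⨆ i, g i y with hM
  have hMfun : ∀ y ∈ cpwlDom d β, cpwlFun a α d β y = ((M y : ℝ) : EReal) := by
    intro y hy
    simp only [cpwlFun, if_pos hy]; rfl
  have hMtop : ∀ y, y ∉ cpwlDom d β → cpwlFun a α d β y = ⊤ := by
    intro y hy; simp only [cpwlFun, if_neg hy]
  have hMle : ∀ y i, g i y ≤ M y := by
    intro y i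
    show g i y ≤ ⨆ j, g j y
    exact le_ciSup (Set.Finite.bddAbove (Set.finite_range fun j => g j y)) i
  have hMmax : ∀ y, ∃ i, M y = g i y := by
    intro y
    obtain ⟨i, hi⟩ := Finite.exists_max (fun i => g i y)
    exact ⟨i, le_antisymm (ciSup_le hi) (hMle y i)⟩
  obtain ⟨j₀, hj₀⟩ := Finite.exists_max (fun i => g i zb)
  have hMzb : M zb = g j₀ zb := le_antisymm (ciSup_le hj₀) (hMle zb j₀)
  have hgc : ∀ i, Continuous (g i) := fun i =>
    Continuous.sub (Continuous.inner continuous_const continuous_id) continuous_const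
  set O' : Set (Euc m) :=
    {y | (∀ i, ⟪d i, zb⟫ < β i → ⟪d i, y⟫ < β i) ∧
         (∀ i, g i zb < g j₀ zb → g i y < g j₀ y)} with hO'
  have h1 : IsOpen {y : Euc m | ∀ i, ⟪d i, zb⟫ < β i → ⟪d i, y⟫ < β i} := by
    have he : {y : Euc m | ∀ i, ⟪d i, zb⟫ < β i → ⟪d i, y⟫ < β i}
        = ⋂ i, {y : Euc m | ⟪d i, zb⟫ < β i → ⟪d i, y⟫ < β i} := by
      ext y; simp [Set.mem_iInter]
    rw [he]
    refine isOpen_iInter_of_finite fun i => ?_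
    by_cases hi : ⟪d i, zb⟫ < β i
    · have he2 : {y : Euc m | ⟪d i, zb⟫ < β i → ⟪d i, y⟫ < β i}
          = {y : Euc m | ⟪d i, y⟫ < β i} := by
        ext y; simp only [Set.mem_setOf_eq]; tauto
      rw [he2]
      exact isOpen_lt (Continuous.inner continuous_const continuous_id) continuous_const
    · have he2 : {y : Euc m | ⟪d i, zb⟫ < β i → ⟪d i, y⟫ < β i} = Set.univ := by
        ext y; simp only [Set.mem_setOf_eq, Set.mem_univ, iff_true]; tauto
      rw [he2]; exact isOpen_univ
  have h2 : IsOpen {y : Euc m | ∀ i, g i zb < g j₀ zb → g i y < g j₀ y} := by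
    have he : {y : Euc m | ∀ i, g i zb < g j₀ zb → g i y < g j₀ y}
        = ⋂ i, {y : Euc m | g i zb < g j₀ zb → g i y < g j₀ y} := by
      ext y; simp [Set.mem_iInter]
    rw [he]
    refine isOpen_iInter_of_finite fun i => ?_
    by_cases hi : g i zb < g j₀ zb
    · have he2 : {y : Euc m | g i zb < g j₀ zb → g i y < g j₀ y}
          = {y : Euc m | g i y < g j₀ y} := by
        ext y; simp only [Set.mem_setOf_eq]; tauto
      rw [he2]
      exact isOpen_lt (hgc i) (hgc j₀)
    · have he2 : {y : Euc m | g i zb < g j₀ zb → g i y < g j₀ y} = Set.univ := by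
        ext y; simp only [Set.mem_setOf_eq, Set.mem_univ, iff_true]; tauto
      rw [he2]; exact isOpen_univ
  have hO'open : IsOpen O' := by
    have : O' = {y : Euc m | ∀ i, ⟪d i, zb⟫ < β i → ⟪d i, y⟫ < β i}
        ∩ {y : Euc m | ∀ i, g i zb < g j₀ zb → g i y < g j₀ y} := rfl
    rw [this]; exact h1.inter h2
  have hzbO' : zb ∈ O' := ⟨fun i h => h, fun i h => h⟩
  set T : Euc m → Euc m := fun y => (2 : ℝ) • y - zb with hT
  have hTcont : Continuous T := (continuous_id.const_smul (2 : ℝ)).sub continuous_const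
  have hTzb : T zb = zb := by
    show (2 : ℝ) • zb - zb = zb
    rw [two_smul]; exact add_sub_cancel_right zb zb
  refine ⟨O' ∩ T ⁻¹' O', hO'open.inter (hO'open.preimage hTcont),
    ⟨hzbO', by simp only [Set.mem_preimage, hTzb]; exact hzbO'⟩, ?_⟩
  rintro z ⟨hzO', hzT⟩ v hv
  simp only [subdiff, Set.mem_setOf_eq] at hv ⊢
  by_cases hzd : z ∈ cpwlDom d β
  swap
  · exfalso
    have hc := hv zb
    rw [hMtop z hzd, hMfun zb hzb, EReal.top_add_coe] at hc
    exact (EReal.coe_lt_top (M zb)).not_ge hc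
  have hw : T z ∈ O' := hzT
  set w : Euc m := T z with hwdef
  have hwz : w - z = z - zb := by
    show (2 : ℝ) • z - zb - z = z - zb
    rw [two_smul]; abel
  have hwdom : w ∈ cpwlDom d β := by
    intro i
    by_cases hi : ⟪d i, zb⟫ < β i
    · exact (hw.1 i hi).le
    · have heq : ⟪d i, zb⟫ = β i := le_antisymm (hzb i) (not_lt.1 hi)
      have hcomp : ⟪d i, w⟫ = 2 * ⟪d i, z⟫ - ⟪d i, zb⟫ := by
        show ⟪d i, (2 : ℝ) • z - zb⟫ = _
        rw [inner_sub_right, real_inner_smul_right]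
      rw [hcomp, heq]
      have := hzd i
      linarith
  obtain ⟨i₁, hi₁⟩ := hMmax z
  have hi₁act : g i₁ zb = g j₀ zb := by
    by_contra hne
    have hlt : g i₁ zb < g j₀ zb := lt_of_le_of_ne (hj₀ i₁) hne
    have hlt2 := hzO'.2 i₁ hlt
    have hge : g j₀ z ≤ g i₁ z := by rw [← hi₁]; exact hMle z j₀
    linarith
  obtain ⟨i₂, hi₂⟩ := hMmax w
  have hi₂act : g i₂ zb = g j₀ zb := by
    by_contra hne
    have hlt : g i₂ zb < g j₀ zb := lt_of_le_of_ne (hj₀ i₂) hne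
    have hlt2 := hw.2 i₂ hlt
    have hge : g j₀ w ≤ g i₂ w := by rw [← hi₂]; exact hMle w j₀
    linarith
  have hgw : ∀ i, g i w = 2 * g i z - g i zb := by
    intro i
    show ⟪a i, (2 : ℝ) • z - zb⟫ - α i = 2 * (⟪a i, z⟫ - α i) - (⟪a i, zb⟫ - α i)
    rw [inner_sub_right, real_inner_smul_right]; ring
  have hMw : M w ≤ 2 * M z - M zb := by
    rw [hi₂, hgw i₂, hi₂act, hMzb]
    have := hMle z i₂
    linarith
  have hsub := hv w
  rw [hMfun z hzd, hMfun w hwdom, ← EReal.coe_add, EReal.coe_le_coe_iff, hwz] at hsub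
  have hflip : ⟪v, z - zb⟫ = -⟪v, zb - z⟫ := by
    rw [← inner_neg_right, neg_sub]
  have hkey : M zb ≤ M z + ⟪v, zb - z⟫ := by linarith
  intro z'
  by_cases hz'd : z' ∈ cpwlDom d β
  · rw [hMfun zb hzb, hMfun z' hz'd, ← EReal.coe_add, EReal.coe_le_coe_iff]
    have hsub' := hv z'
    rw [hMfun z hzd, hMfun z' hz'd, ← EReal.coe_add, EReal.coe_le_coe_iff] at hsub'
    have hsplit : ⟪v, z' - zb⟫ = ⟪v, z' - z⟫ + ⟪v, z - zb⟫ := by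
      rw [← inner_add_right]; congr 1; abel
    linarith
  · rw [hMtop z' hz'd]; exact le_top
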